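/- Assume d^* < ∞, q ∈ L¹_loc([0,∞)) with q(x) ≥ 1 for a.e. x, and suppose that (a) for every ε > 0, ∫_x^{x+ε} q(t) dt → ∞ as x → ∞ (Molchanov's condition), and (b) (1/d_k)∫_{Δ_k} q(x) dx → ∞ as k → ∞. Then the tails of functions in the unit ball of the Neumann form are uniformly small: for every δ > 0 there exists p ∈ ℕ such that every piecewise H¹ function f with Σ_k ∫_{Δ_k}(|f'(x)|² + q(x)|f(x)|²) dx ≤ 1 satisfies ∫_{x_{p−1}}^∞ |f(x)|² dx ≤ δ. (This uniform tail estimate is the core of the sufficiency part of the discreteness criterion for the operator H^N_{X,q}.) -/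

import Mathlib

open MeasureTheory Set Filter

noncomputable section

/-- A function that is *piecewise `H¹`* with respect to the partition points
`x 0 < x 1 < x 2 < ⋯` of `[0,∞)`: on each interval `Δ_{k+1} = [x k, x (k+1)]` it is
absolutely continuous with derivative `f' ∈ L²`, encoded via the fundamental
theorem of calculus; `fr k = f(x k +)` and `fl (k+1) = f(x (k+1) −)` are the
one-sided limits at the nodes. -/
structure PW1 (x : ℕ → ℝ) where
  f : ℝ → ℝ
  f' : ℝ → ℝ
  fr : ℕ → ℝ
  fl : ℕ → ℝ
  int_d : ∀ k, IntegrableOn f' (Icc (x k) (x (k + 1))) volume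
  sq_d : ∀ k, IntegrableOn (fun t => f' t ^ 2) (Icc (x k) (x (k + 1))) volume
  ftc : ∀ k, ∀ t ∈ Ioo (x k) (x (k + 1)), f t = fr k + ∫ s in Ioc (x k) t, f' s
  fl_eq : ∀ k, fl (k + 1) = fr k + ∫ s in Ioc (x k) (x (k + 1)), f' s

/-- The jump `f(x_{k+1}+) − f(x_{k+1}−)` of a piecewise `H¹` function at the
interior node `x (k+1)` (the paper's node `x_{k+1}`). -/
def PW1.jump {x : ℕ → ℝ} (F : PW1 x) (k : ℕ) : ℝ := F.fr (k + 1) - F.fl (k + 1)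

/-- Membership in the domain of the form `t_{X,β,q}`: `f ∈ L²(0,∞)`,
`∫₀^∞ |f'|² < ∞`, `∫₀^∞ |q| |f|² < ∞` and `Σ_k |f(x_k+) − f(x_k−)|²/|β_k| < ∞`. -/
def MemDom (x : ℕ → ℝ) (q : ℝ → ℝ) (β : ℕ → ℝ) (F : PW1 x) : Prop :=
  IntegrableOn (fun t => F.f t ^ 2) (Ioi 0) volume ∧
  IntegrableOn (fun t => F.f' t ^ 2) (Ioi 0) volume ∧
  IntegrableOn (fun t => |q t| * F.f t ^ 2) (Ioi 0) volume ∧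
  Summable (fun k => F.jump k ^ 2 / |β (k + 1)|)

/-- The value of the quadratic form
`t_{X,β,q}[f] = ∫₀^∞ (|f'|² + q |f|²) dx + Σ_k |f(x_k+) − f(x_k−)|²/β_k`. -/
def formVal (x : ℕ → ℝ) (q : ℝ → ℝ) (β : ℕ → ℝ) (F : PW1 x) : ℝ :=
  (∫ t in Ioi (0 : ℝ), (F.f' t ^ 2 + q t * F.f t ^ 2)) +
    ∑' k, F.jump k ^ 2 / β (k + 1)


set_option linter.unusedVariables false

lemma pw1_bound {x : ℕ → ℝ} (F : PW1 x) (k : ℕ) :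
    ∃ C : ℝ, (AEStronglyMeasurable F.f (volume.restrict (Ioo (x k) (x (k+1))))) ∧
      ∀ t ∈ Ioo (x k) (x (k+1)), |F.f t| ≤ C := by
  set g : ℝ → ℝ := fun t => F.fr k + ∫ s in Ioc (x k) t, F.f' s with hg
  have hgc : ContinuousOn g (Icc (x k) (x (k+1))) :=
    (continuousOn_const).add (intervalIntegral.continuousOn_primitive (F.int_d k))
  obtain ⟨C, hC⟩ := (isCompact_Icc (a := x k) (b := x (k+1))).exists_bound_of_continuousOn hgc
  have heq : ∀ t ∈ Ioo (x k) (x (k+1)), F.f t = g t := fun t ht => F.ftc k t ht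
  refine ⟨C, ?_, ?_⟩
  · have hgm : AEStronglyMeasurable g (volume.restrict (Ioo (x k) (x (k+1)))) :=
      (hgc.mono Ioo_subset_Icc_self).aestronglyMeasurable measurableSet_Ioo
    refine hgm.congr ?_
    exact (ae_restrict_iff' measurableSet_Ioo).2
      (Filter.Eventually.of_forall fun t ht => (heq t ht).symm)
  · intro t ht
    rw [heq t ht]
    simpa [Real.norm_eq_abs] using hC t (Ioo_subset_Icc_self ht)

lemma pw1_int {x : ℕ → ℝ} (hx0 : x 0 = 0) (hmono : StrictMono x)
    {q : ℝ → ℝ} (hq : ∀ a b : ℝ, 0 ≤ a → IntegrableOn q (Icc a b) volume)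
    (F : PW1 x) (k : ℕ) :
    IntegrableOn (fun t => F.f t ^ 2) (Ioo (x k) (x (k+1))) volume ∧
    IntegrableOn (fun t => q t * F.f t ^ 2) (Ioo (x k) (x (k+1))) volume := by
  obtain ⟨C, hm, hb⟩ := pw1_bound F k
  have hlt : x k < x (k+1) := hmono (Nat.lt_succ_self k)
  have hxk0 : (0:ℝ) ≤ x k := by rw [← hx0]; exact hmono.monotone (Nat.zero_le k)
  have hqI : IntegrableOn q (Ioo (x k) (x (k+1))) volume :=
    (hq (x k) (x (k+1)) hxk0).mono_set Ioo_subset_Icc_self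
  have hC0 : 0 ≤ C := le_trans (abs_nonneg _) (hb ((x k + x (k+1))/2) ⟨by linarith, by linarith⟩)
  have hfin : volume (Ioo (x k) (x (k+1))) ≠ ⊤ := measure_Ioo_lt_top.ne
  have hbd : ∀ᵐ t ∂(volume.restrict (Ioo (x k) (x (k+1)))), ‖F.f t ^ 2‖ ≤ C ^ 2 := by
    rw [ae_restrict_iff' measurableSet_Ioo]
    refine Filter.Eventually.of_forall fun t ht => ?_
    have := hb t ht
    rw [Real.norm_eq_abs, abs_pow]
    have h0 := abs_nonneg (F.f t)
    nlinarith
  have hm2 : AEStronglyMeasurable (fun t => F.f t ^ 2)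
      (volume.restrict (Ioo (x k) (x (k+1)))) := by
    have h : AEStronglyMeasurable (fun t => F.f t * F.f t) _ := hm.mul hm; simpa [sq] using h
  have hf2 : IntegrableOn (fun t => F.f t ^ 2) (Ioo (x k) (x (k+1))) volume := by
    refine ⟨hm2, ?_⟩
    exact (HasFiniteIntegral.restrict_of_bounded (C := C^2) hfin.lt_top hbd)
  refine ⟨hf2, ?_⟩
  have hqm : AEStronglyMeasurable q (volume.restrict (Ioo (x k) (x (k+1)))) := hqI.1
  refine Integrable.mono' (g := fun t => C^2 * |q t|) (hqI.abs.const_mul _) (hqm.mul hm2) ?_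
  rw [ae_restrict_iff' measurableSet_Ioo]
  refine Filter.Eventually.of_forall fun t ht => ?_
  have h1 := hb t ht
  have h0 := abs_nonneg (F.f t)
  have h2 : |F.f t| ^ 2 ≤ C ^ 2 := by nlinarith
  calc ‖q t * F.f t ^ 2‖ = |q t| * |F.f t| ^ 2 := by
        rw [Real.norm_eq_abs, abs_mul, abs_pow, sq_abs, ← sq_abs (F.f t)]
    _ ≤ |q t| * C ^ 2 := by
        exact mul_le_mul_of_nonneg_left h2 (abs_nonneg _)
    _ = C ^ 2 * |q t| := by ring

lemma cs_aux {a b : ℝ} (hab : a ≤ b) {g : ℝ → ℝ}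
    (hg2 : IntegrableOn (fun t => g t ^ 2) (Ioo a b) volume)
    (hgm : AEStronglyMeasurable g (volume.restrict (Ioo a b))) :
    (∫ t in Ioo a b, |g t|) ^ 2 ≤ (b - a) * ∫ t in Ioo a b, g t ^ 2 := by
  set μ := volume.restrict (Ioo a b) with hμ
  haveI : IsFiniteMeasure μ := by
    constructor
    rw [Measure.restrict_apply_univ]
    exact measure_Ioo_lt_top
  have habs2 : Integrable (fun t => |g t| ^ 2) μ := by
    have h : Integrable (fun t => g t ^ 2) μ := hg2; simpa [sq_abs] using h
  have hgabs : AEStronglyMeasurable (fun t => |g t|) μ := by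
    simpa [Real.norm_eq_abs] using hgm.norm
  have hmem : MemLp (fun t => |g t|) 2 μ :=
    (memLp_two_iff_integrable_sq hgabs).mpr habs2
  have hone : MemLp (fun _ : ℝ => (1 : ℝ)) 2 μ := memLp_const 1
  have hconj : (2 : ℝ).HolderConjugate 2 := Real.HolderConjugate.two_two
  have h2 : ENNReal.ofReal (2:ℝ) = 2 := by
    simp [ENNReal.ofReal_ofNat]
  have key := integral_mul_le_Lp_mul_Lq_of_nonneg (μ := μ) hconj
    (f := fun t => |g t|) (g := fun _ => 1)
    (Filter.Eventually.of_forall fun t => abs_nonneg _)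
    (Filter.Eventually.of_forall fun t => zero_le_one)
    (by rw [h2]; exact hmem) (by rw [h2]; exact hone)
  simp only [mul_one] at key
  have hA : ∫ t, |g t| ^ (2:ℝ) ∂μ = ∫ t in Ioo a b, g t ^ 2 := by
    refine integral_congr_ae (Filter.Eventually.of_forall fun t => ?_)
    show |g t| ^ (2:ℝ) = g t ^ 2
    rw [show (2:ℝ) = ((2:ℕ):ℝ) by norm_num, Real.rpow_natCast, sq_abs]
  have hB : ∫ _t, (1:ℝ) ^ (2:ℝ) ∂μ = b - a := by
    simp only [Real.one_rpow, integral_const, smul_eq_mul, mul_one, hμ,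
      Measure.restrict_apply_univ, Real.volume_Ioo]
    simp [Real.volume_real_Ioo_of_le hab]
  rw [hA, hB] at key
  have hE : 0 ≤ ∫ t in Ioo a b, g t ^ 2 :=
    integral_nonneg fun t => sq_nonneg _
  have hba : 0 ≤ b - a := by linarith
  have hnn : 0 ≤ ∫ t in Ioo a b, |g t| := integral_nonneg fun t => abs_nonneg _
  calc (∫ t in Ioo a b, |g t|) ^ 2
      ≤ ((∫ t in Ioo a b, g t ^ 2) ^ ((1:ℝ)/2) * (b - a) ^ ((1:ℝ)/2)) ^ 2 := by
        apply pow_le_pow_left₀ hnn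
        exact key
    _ = (b - a) * ∫ t in Ioo a b, g t ^ 2 := by
        rw [mul_pow, ← Real.rpow_natCast ((∫ t in Ioo a b, g t ^ 2) ^ ((1:ℝ)/2)) 2,
          ← Real.rpow_natCast ((b-a) ^ ((1:ℝ)/2)) 2,
          ← Real.rpow_mul hE, ← Real.rpow_mul hba]
        norm_num [mul_comm]

lemma piece {x : ℕ → ℝ} (F : PW1 x) {q : ℝ → ℝ} {k : ℕ} {a b : ℝ}
    (hka : x k ≤ a) (hab : a < b) (hb : b ≤ x (k+1))
    (hqI : IntegrableOn q (Ioo a b) volume)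
    (hq0 : ∀ᵐ t ∂(volume.restrict (Ioo a b)), 1 ≤ q t)
    (hf2 : IntegrableOn (fun t => F.f t ^ 2) (Ioo a b) volume)
    (hqf2 : IntegrableOn (fun t => q t * F.f t ^ 2) (Ioo a b) volume) :
    ∫ t in Ioo a b, F.f t ^ 2 ≤
      2*(b-a)^2 * (∫ t in Ioo a b, F.f' t ^ 2)
      + (2*(b-a) / ∫ t in Ioo a b, q t) * ∫ t in Ioo a b, q t * F.f t ^ 2 := by
  have hsub : Ioo a b ⊆ Icc (x k) (x (k+1)) := fun t ht =>
    ⟨hka.trans ht.1.le, ht.2.le.trans hb⟩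
  have hsub' : Ioo a b ⊆ Ioo (x k) (x (k+1)) := fun t ht =>
    ⟨lt_of_le_of_lt hka ht.1, lt_of_lt_of_le ht.2 hb⟩
  have hf'1 : IntegrableOn F.f' (Ioo a b) volume := (F.int_d k).mono_set hsub
  have hf'2 : IntegrableOn (fun t => F.f' t ^ 2) (Ioo a b) volume := (F.sq_d k).mono_set hsub
  set E := ∫ t in Ioo a b, F.f' t ^ 2 with hE
  set L := ∫ t in Ioo a b, |F.f' t| with hLdef
  set Qint := ∫ t in Ioo a b, q t with hQdef
  set J := ∫ t in Ioo a b, q t * F.f t ^ 2 with hJdef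
  have hE0 : 0 ≤ E := integral_nonneg fun t => sq_nonneg _
  have hL0 : 0 ≤ L := integral_nonneg fun t => abs_nonneg _
  have hL2 : L ^ 2 ≤ (b - a) * E := cs_aux hab.le hf'2 hf'1.1
  have hQ_lb : b - a ≤ Qint := by
    have h1 : ∫ _t in Ioo a b, (1:ℝ) ≤ Qint := by
      refine integral_mono_ae (by simp) hqI hq0
    calc b - a = ∫ _t in Ioo a b, (1:ℝ) := by
          simp [Real.volume_Ioo]
          linarith
      _ ≤ Qint := h1
  have hQpos : 0 < Qint := lt_of_lt_of_le (by linarith) hQ_lb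
  -- interval integrability of f'
  have hii : ∀ t ∈ Ioo a b, IntervalIntegrable F.f' volume (x k) t := by
    intro t ht
    rw [intervalIntegrable_iff, uIoc_of_le (hka.trans ht.1.le)]
    exact (F.int_d k).mono_set (Ioc_subset_Icc_self.trans
      (Icc_subset_Icc le_rfl (ht.2.le.trans hb)))
  have hdiff : ∀ s ∈ Ioo a b, ∀ t ∈ Ioo a b, s ≤ t →
      F.f t - F.f s = ∫ u in s..t, F.f' u := by
    intro s hs t ht hst
    rw [F.ftc k s (hsub' hs), F.ftc k t (hsub' ht)]
    have h1 : ∫ u in Ioc (x k) t, F.f' u = ∫ u in (x k)..t, F.f' u :=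
      (intervalIntegral.integral_of_le (hka.trans ht.1.le)).symm
    have h2 : ∫ u in Ioc (x k) s, F.f' u = ∫ u in (x k)..s, F.f' u :=
      (intervalIntegral.integral_of_le (hka.trans hs.1.le)).symm
    have h3 := intervalIntegral.integral_interval_sub_left (hii t ht) (hii s hs)
    rw [h1, h2]
    linarith [h3]
  have habs : ∀ s ∈ Ioo a b, ∀ t ∈ Ioo a b, |F.f t - F.f s| ≤ L := by
    suffices H : ∀ s ∈ Ioo a b, ∀ t ∈ Ioo a b, s ≤ t → |F.f t - F.f s| ≤ L by
      intro s hs t ht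
      rcases le_total s t with h | h
      · exact H s hs t ht h
      · rw [abs_sub_comm]; exact H t ht s hs h
    intro s hs t ht hst
    rw [hdiff s hs t ht hst]
    have h1 : |∫ u in s..t, F.f' u| ≤ ∫ u in s..t, |F.f' u| := by
      simpa [Real.norm_eq_abs] using
        intervalIntegral.norm_integral_le_integral_norm (f := F.f') (μ := volume) hst
    have h2 : ∫ u in s..t, |F.f' u| ≤ L := by
      rw [intervalIntegral.integral_of_le hst]
      refine setIntegral_mono_set hf'1.abs
        (Filter.Eventually.of_forall fun u => abs_nonneg _) ?_
      refine HasSubset.Subset.eventuallyLE ?_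
      intro u hu
      exact ⟨hs.1.trans hu.1, lt_of_le_of_lt hu.2 ht.2⟩
    linarith
  have hptsq : ∀ t ∈ Ioo a b, ∀ s ∈ Ioo a b,
      F.f t ^ 2 ≤ 2 * F.f s ^ 2 + 2 * (b - a) * E := by
    intro t ht s hs
    have h1 := habs s hs t ht
    have h2 : (F.f t - F.f s) ^ 2 ≤ (b - a) * E := by
      calc (F.f t - F.f s) ^ 2 = |F.f t - F.f s| ^ 2 := (sq_abs _).symm
        _ ≤ L ^ 2 := by nlinarith [abs_nonneg (F.f t - F.f s)]
        _ ≤ (b - a) * E := hL2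
    nlinarith [sq_nonneg (F.f t - 2 * F.f s)]
  have hpt : ∀ t ∈ Ioo a b, F.f t ^ 2 ≤ 2 * J / Qint + 2 * (b - a) * E := by
    intro t ht
    have hle : ∫ s in Ioo a b, F.f t ^ 2 * q s ≤
        ∫ s in Ioo a b, (2 * (q s * F.f s ^ 2) + (2 * (b - a) * E) * q s) := by
      refine integral_mono_ae (hqI.const_mul _)
        ((hqf2.const_mul 2).add (hqI.const_mul _)) ?_
      filter_upwards [hq0, ae_restrict_mem measurableSet_Ioo] with s h1 h2
      have hq0s : (0:ℝ) ≤ q s := by linarith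
      have := hptsq t ht s h2
      nlinarith
    have hcalc : F.f t ^ 2 * Qint ≤ 2 * J + 2 * (b - a) * E * Qint := by
      calc F.f t ^ 2 * Qint = ∫ s in Ioo a b, F.f t ^ 2 * q s := by
            rw [integral_const_mul]
        _ ≤ _ := hle
        _ = 2 * J + 2 * (b - a) * E * Qint := by
            rw [integral_add (hqf2.const_mul 2) (hqI.const_mul _),
              integral_const_mul, integral_const_mul]
    rw [← sub_nonneg]
    have h4 : 2 * J / Qint + 2 * (b - a) * E - F.f t ^ 2 =
        (2 * J + 2 * (b - a) * E * Qint - F.f t ^ 2 * Qint) / Qint := by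
      field_simp
    rw [h4]
    exact div_nonneg (by linarith) hQpos.le
  have hfinal : ∫ t in Ioo a b, F.f t ^ 2 ≤
      (b - a) * (2 * J / Qint + 2 * (b - a) * E) := by
    have h := setIntegral_mono_on hf2
      (integrableOn_const measure_Ioo_lt_top.ne) measurableSet_Ioo hpt
    rw [setIntegral_const, smul_eq_mul,
      Real.volume_real_Ioo_of_le (by linarith : a ≤ b)] at h
    exact h
  calc ∫ t in Ioo a b, F.f t ^ 2 ≤ (b - a) * (2 * J / Qint + 2 * (b - a) * E) := hfinal
    _ = 2*(b-a)^2 * E + (2*(b-a) / Qint) * J := by ring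

lemma sum_Ioo {g : ℝ → ℝ} {A B : ℝ} (hAB : A ≤ B) (hg : IntegrableOn g (Ioc A B) volume)
    {n : ℕ} {y : ℕ → ℝ} (hy0 : y 0 = A) (hyn : y n = B) (hmy : Monotone y) :
    ∑ j ∈ Finset.range n, ∫ t in Ioo (y j) (y (j+1)), g t = ∫ t in Ioo A B, g t := by
  have hii : ∀ j, j < n → IntervalIntegrable g volume (y j) (y (j+1)) := by
    intro j hj
    rw [intervalIntegrable_iff, uIoc_of_le (hmy (Nat.le_succ j))]
    refine hg.mono_set (Ioc_subset_Ioc ?_ ?_)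
    · rw [← hy0]; exact hmy (Nat.zero_le j)
    · rw [← hyn]; exact hmy hj
  calc ∑ j ∈ Finset.range n, ∫ t in Ioo (y j) (y (j+1)), g t
      = ∑ j ∈ Finset.range n, ∫ t in (y j)..(y (j+1)), g t := by
        refine Finset.sum_congr rfl fun j _ => ?_
        rw [intervalIntegral.integral_of_le (hmy (Nat.le_succ j)),
          integral_Ioc_eq_integral_Ioo]
    _ = ∫ t in (y 0)..(y n), g t := intervalIntegral.sum_integral_adjacent_intervals hii
    _ = ∫ t in Ioo A B, g t := by
        rw [hy0, hyn, intervalIntegral.integral_of_le hAB, integral_Ioc_eq_integral_Ioo]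

set_option maxHeartbeats 1000000 in
lemma delta_bound {x : ℕ → ℝ} (hx0 : x 0 = 0) (hmono : StrictMono x) (F : PW1 x)
    {q : ℝ → ℝ} (hq : ∀ a b : ℝ, 0 ≤ a → IntegrableOn q (Icc a b) volume)
    (hq1 : ∀ᵐ t ∂(volume.restrict (Ioi (0:ℝ))), 1 ≤ q t)
    {δ ε : ℝ} (hδ : 0 < δ) (hε : 0 < ε) (h8 : 8 * ε^2 ≤ δ)
    {k : ℕ}
    (hMolk : ∀ y : ℝ, x k ≤ y → 4*ε/δ ≤ ∫ t in Icc y (y+ε), q t)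
    (hmeank : 2/δ * (x (k+1) - x k) ≤ ∫ t in Icc (x k) (x (k+1)), q t) :
    ∫ t in Ioo (x k) (x (k+1)), F.f t ^ 2 ≤
      δ * ((∫ t in Ioo (x k) (x (k+1)), F.f' t ^ 2) +
        ∫ t in Ioo (x k) (x (k+1)), q t * F.f t ^ 2) := by
  have hlt : x k < x (k+1) := hmono (Nat.lt_succ_self k)
  set d := x (k+1) - x k with hddef
  have hd : 0 < d := by simp [hddef]; linarith
  have hxk0 : (0:ℝ) ≤ x k := by rw [← hx0]; exact hmono.monotone (Nat.zero_le k)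
  have hIoi : Ioo (x k) (x (k+1)) ⊆ Ioi (0:ℝ) := fun t ht =>
    lt_of_le_of_lt hxk0 ht.1
  have hq0Δ : ∀ᵐ t ∂(volume.restrict (Ioo (x k) (x (k+1)))), 1 ≤ q t :=
    ae_restrict_of_ae_restrict_of_subset hIoi hq1
  have hqIΔ : IntegrableOn q (Ioo (x k) (x (k+1))) volume :=
    (hq (x k) (x (k+1)) hxk0).mono_set Ioo_subset_Icc_self
  obtain ⟨hf2Δ, hqf2Δ⟩ := pw1_int hx0 hmono hq F k
  have hf'2Δ : IntegrableOn (fun t => F.f' t ^ 2) (Ioo (x k) (x (k+1))) volume :=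
    (F.sq_d k).mono_set Ioo_subset_Icc_self
  -- nonnegativity of sub-pieces
  have hJnn : ∀ a b : ℝ, x k ≤ a → b ≤ x (k+1) →
      0 ≤ ∫ t in Ioo a b, q t * F.f t ^ 2 := by
    intro a b ha hb
    refine integral_nonneg_of_ae ?_
    have hss : Ioo a b ⊆ Ioo (x k) (x (k+1)) := fun t ht =>
      ⟨lt_of_le_of_lt ha ht.1, lt_of_lt_of_le ht.2 hb⟩
    have : ∀ᵐ t ∂(volume.restrict (Ioo a b)), 1 ≤ q t :=
      ae_restrict_of_ae_restrict_of_subset hss hq0Δ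
    filter_upwards [this] with t h1
    simp only [Pi.zero_apply]
    nlinarith [sq_nonneg (F.f t)]
  rcases le_or_gt d ε with hcase | hcase
  · -- single interval
    have hp := piece F (q := q) (k := k) le_rfl hlt le_rfl hqIΔ hq0Δ hf2Δ hqf2Δ
    set E := ∫ t in Ioo (x k) (x (k+1)), F.f' t ^ 2 with hE
    set J := ∫ t in Ioo (x k) (x (k+1)), q t * F.f t ^ 2 with hJ
    set Qint := ∫ t in Ioo (x k) (x (k+1)), q t with hQ
    have hE0 : 0 ≤ E := integral_nonneg fun t => sq_nonneg _
    have hJ0 : 0 ≤ J := hJnn _ _ le_rfl le_rfl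
    have hQlb : 2/δ * d ≤ Qint := by
      rw [hQ, ← integral_Icc_eq_integral_Ioo]; exact hmeank
    have hQpos : 0 < Qint := lt_of_lt_of_le (by positivity) hQlb
    have hc1 : 2 * (x (k+1) - x k)^2 ≤ δ := by
      have : (x (k+1) - x k) = d := rfl
      nlinarith
    have hc2 : 2 * (x (k+1) - x k) / Qint ≤ δ := by
      rw [div_le_iff₀ hQpos]
      have h1 : δ * (2/δ * d) ≤ δ * Qint := by
        exact mul_le_mul_of_nonneg_left hQlb hδ.le
      have h2 : δ * (2/δ * d) = 2 * d := by field_simp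
      have : (x (k+1) - x k) = d := rfl
      linarith
    calc ∫ t in Ioo (x k) (x (k+1)), F.f t ^ 2
        ≤ 2*(x (k+1) - x k)^2 * E + (2*(x (k+1) - x k) / Qint) * J := hp
      _ ≤ δ * E + δ * J := by
          refine add_le_add (mul_le_mul_of_nonneg_right hc1 hE0)
            (mul_le_mul_of_nonneg_right hc2 hJ0)
      _ = δ * (E + J) := by ring
  · -- subdivide into n pieces of length ℓ ∈ [ε, 2ε]
    set n := ⌊d / ε⌋₊ with hndef
    have hn1 : 1 ≤ n := by
      rw [hndef]
      exact Nat.le_floor (by rw [Nat.cast_one, le_div_iff₀ hε]; linarith)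
    have hnposR : (0:ℝ) < n := by exact_mod_cast Nat.lt_of_lt_of_le Nat.zero_lt_one hn1
    set ℓ := d / n with hℓdef
    have hℓpos : 0 < ℓ := div_pos hd hnposR
    have hεℓ : ε ≤ ℓ := by
      rw [hℓdef, le_div_iff₀ hnposR]
      have h1 : (n:ℝ) ≤ d / ε := Nat.floor_le (by positivity)
      calc ε * n ≤ ε * (d / ε) := mul_le_mul_of_nonneg_left h1 hε.le
        _ = d := by field_simp
    have hℓ2ε : ℓ ≤ 2 * ε := by
      rw [hℓdef, div_le_iff₀ hnposR]
      have h1 : d / ε < n + 1 := Nat.lt_floor_add_one _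
      have h2 : (n:ℝ) + 1 ≤ 2 * n := by
        have : (1:ℝ) ≤ n := by exact_mod_cast hn1
        linarith
      have h3 : d / ε < 2 * n := lt_of_lt_of_le h1 h2
      have h4 : d < 2 * n * ε := by
        rw [div_lt_iff₀ hε] at h3; linarith
      nlinarith
    set y : ℕ → ℝ := fun j => x k + j * ℓ with hydef
    have hy0 : y 0 = x k := by simp [hydef]
    have hyn : y n = x (k+1) := by
      simp only [hydef, hℓdef]
      rw [mul_div_cancel₀ _ (ne_of_gt hnposR)]
      simp [hddef]
    have hystep : ∀ j : ℕ, y (j+1) = y j + ℓ := by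
      intro j; simp only [hydef]; push_cast; ring
    have hymono : Monotone y := by
      intro i j hij
      simp only [hydef]
      have : (i:ℝ) ≤ j := by exact_mod_cast hij
      nlinarith
    have hyk : ∀ j : ℕ, j ≤ n → x k ≤ y j ∧ y j ≤ x (k+1) := by
      intro j hj
      constructor
      · rw [← hy0]; exact hymono (Nat.zero_le j)
      · rw [← hyn]; exact hymono hj
    -- per-piece bound
    have hpieceb : ∀ j : ℕ, j < n →
        ∫ t in Ioo (y j) (y (j+1)), F.f t ^ 2 ≤
          δ * (∫ t in Ioo (y j) (y (j+1)), F.f' t ^ 2) +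
          δ * ∫ t in Ioo (y j) (y (j+1)), q t * F.f t ^ 2 := by
      intro j hj
      have hj1 : j + 1 ≤ n := hj
      have ha : x k ≤ y j := (hyk j hj.le).1
      have hb : y (j+1) ≤ x (k+1) := (hyk (j+1) hj1).2
      have hab : y j < y (j+1) := by rw [hystep]; linarith
      have hsubp : Ioo (y j) (y (j+1)) ⊆ Ioo (x k) (x (k+1)) := fun t ht =>
        ⟨lt_of_le_of_lt ha ht.1, lt_of_lt_of_le ht.2 hb⟩
      have hqIp : IntegrableOn q (Ioo (y j) (y (j+1))) volume := hqIΔ.mono_set hsubp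
      have hq0p : ∀ᵐ t ∂(volume.restrict (Ioo (y j) (y (j+1)))), 1 ≤ q t :=
        ae_restrict_of_ae_restrict_of_subset hsubp hq0Δ
      have hp := piece F (q := q) (k := k) ha hab hb hqIp hq0p
        (hf2Δ.mono_set hsubp) (hqf2Δ.mono_set hsubp)
      set Ej := ∫ t in Ioo (y j) (y (j+1)), F.f' t ^ 2 with hEj
      set Jj := ∫ t in Ioo (y j) (y (j+1)), q t * F.f t ^ 2 with hJj
      set Qj := ∫ t in Ioo (y j) (y (j+1)), q t with hQj
      have hEj0 : 0 ≤ Ej := integral_nonneg fun t => sq_nonneg _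
      have hJj0 : 0 ≤ Jj := hJnn _ _ ha hb
      have hlen : y (j+1) - y j = ℓ := by rw [hystep]; ring
      -- Q_j lower bound via Molchanov
      have hQlb : 4*ε/δ ≤ Qj := by
        have h1 : 4*ε/δ ≤ ∫ t in Icc (y j) (y j + ε), q t := hMolk (y j) ha
        have h2 : ∫ t in Icc (y j) (y j + ε), q t ≤ Qj := by
          refine setIntegral_mono_set hqIp ?_ ?_
          · filter_upwards [hq0p] with t h
            try simp only [Pi.zero_apply]
            linarith
          · have hnull : (volume : Measure ℝ) {y j, y j + ε} = 0 :=
              Set.Countable.measure_zero ((Set.toFinite _).countable) volume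
            have hae := measure_eq_zero_iff_ae_notMem.mp hnull
            filter_upwards [hae] with t hnm hmem
            simp only [mem_insert_iff, mem_singleton_iff, not_or] at hnm
            constructor
            · exact lt_of_le_of_ne hmem.1 (Ne.symm hnm.1)
            · have h3 : t ≤ y j + ε := hmem.2
              have h4 : t ≠ y j + ε := hnm.2
              have : t < y j + ε := lt_of_le_of_ne h3 h4
              rw [hystep]; linarith
        linarith
      have hQpos : 0 < Qj := lt_of_lt_of_le (by positivity) hQlb
      have hc1 : 2 * (y (j+1) - y j)^2 ≤ δ := by
        rw [hlen]; nlinarith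
      have hc2 : 2 * (y (j+1) - y j) / Qj ≤ δ := by
        rw [hlen, div_le_iff₀ hQpos]
        have h1 : δ * (4*ε/δ) ≤ δ * Qj := mul_le_mul_of_nonneg_left hQlb hδ.le
        have h2 : δ * (4*ε/δ) = 4 * ε := by field_simp
        linarith
      calc ∫ t in Ioo (y j) (y (j+1)), F.f t ^ 2
          ≤ 2*(y (j+1) - y j)^2 * Ej + (2*(y (j+1) - y j) / Qj) * Jj := hp
        _ ≤ δ * Ej + δ * Jj :=
            add_le_add (mul_le_mul_of_nonneg_right hc1 hEj0)
              (mul_le_mul_of_nonneg_right hc2 hJj0)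
    -- summing up
    have hsum : ∀ g : ℝ → ℝ, IntegrableOn g (Ioo (x k) (x (k+1))) volume →
        ∑ j ∈ Finset.range n, ∫ t in Ioo (y j) (y (j+1)), g t =
          ∫ t in Ioo (x k) (x (k+1)), g t := by
      intro g hg
      exact sum_Ioo hlt.le ((integrableOn_Ioc_iff_integrableOn_Ioo).2 hg) hy0 hyn hymono
    calc ∫ t in Ioo (x k) (x (k+1)), F.f t ^ 2
        = ∑ j ∈ Finset.range n, ∫ t in Ioo (y j) (y (j+1)), F.f t ^ 2 :=
          (hsum _ hf2Δ).symm
      _ ≤ ∑ j ∈ Finset.range n, (δ * (∫ t in Ioo (y j) (y (j+1)), F.f' t ^ 2) +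
            δ * ∫ t in Ioo (y j) (y (j+1)), q t * F.f t ^ 2) :=
          Finset.sum_le_sum fun j hj => hpieceb j (Finset.mem_range.mp hj)
      _ = δ * (∑ j ∈ Finset.range n, ∫ t in Ioo (y j) (y (j+1)), F.f' t ^ 2) +
            δ * ∑ j ∈ Finset.range n, ∫ t in Ioo (y j) (y (j+1)), q t * F.f t ^ 2 := by
          rw [Finset.sum_add_distrib, Finset.mul_sum, Finset.mul_sum]
      _ = δ * ((∫ t in Ioo (x k) (x (k+1)), F.f' t ^ 2) +
            ∫ t in Ioo (x k) (x (k+1)), q t * F.f t ^ 2) := by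
          rw [hsum _ hf'2Δ, hsum _ hqf2Δ]; ring

/-- **Core of the sufficiency part of Theorem 3.4** (discreteness of `H^N_{X,q}`):
if `d^* < ∞`, `q ≥ 1` a.e., Molchanov's condition holds and
`(1/d_k) ∫_Δₖ q → ∞`, then the tails of functions in the unit ball of the
Neumann form are uniformly small. -/
theorem stmt_11 (x : ℕ → ℝ) (hx0 : x 0 = 0) (hmono : StrictMono x)
    (hxtop : Tendsto x atTop atTop)
    (D : ℝ) (hD : ∀ k, x (k + 1) - x k ≤ D)
    (q : ℝ → ℝ) (hq : ∀ a b : ℝ, 0 ≤ a → IntegrableOn q (Icc a b) volume)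
    (hq1 : ∀ᵐ t ∂(volume.restrict (Ioi (0 : ℝ))), 1 ≤ q t)
    (hMol : ∀ ε > 0, Tendsto (fun X : ℝ => ∫ t in Icc X (X + ε), q t) atTop atTop)
    (hmean : Tendsto (fun k =>
      (1 / (x (k + 1) - x k)) * ∫ t in Icc (x k) (x (k + 1)), q t) atTop atTop) :
    ∀ δ > 0, ∃ p : ℕ, ∀ F : PW1 x,
      Summable (fun k => ∫ t in Ioo (x k) (x (k + 1)), (F.f' t ^ 2 + q t * F.f t ^ 2)) →
      (∑' k, ∫ t in Ioo (x k) (x (k + 1)), (F.f' t ^ 2 + q t * F.f t ^ 2)) ≤ 1 →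
      (∫ t in Ioi (x p), F.f t ^ 2) ≤ δ := by
  intro δ hδ
  set ε := Real.sqrt (δ/8) with hεdef
  have hε : 0 < ε := Real.sqrt_pos.2 (by linarith)
  have h8 : 8 * ε^2 = δ := by
    rw [hεdef, Real.sq_sqrt (by linarith : (0:ℝ) ≤ δ/8)]; ring
  obtain ⟨X0, hX0⟩ := Filter.eventually_atTop.mp ((hMol ε hε).eventually_ge_atTop (4*ε/δ))
  obtain ⟨K, hK⟩ := Filter.eventually_atTop.mp (hmean.eventually_ge_atTop (2/δ))
  obtain ⟨P, hP⟩ := Filter.eventually_atTop.mp (hxtop.eventually_ge_atTop X0)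
  refine ⟨max K P, ?_⟩
  intro F hsum hle
  set p := max K P with hpdef
  set a : ℕ → ℝ := fun k => ∫ t in Ioo (x k) (x (k+1)), (F.f' t ^ 2 + q t * F.f t ^ 2)
    with hadef
  have hxnn : ∀ k : ℕ, (0:ℝ) ≤ x k := by
    intro k; rw [← hx0]; exact hmono.monotone (Nat.zero_le k)
  have hq0Δ : ∀ k : ℕ, ∀ᵐ t ∂(volume.restrict (Ioo (x k) (x (k+1)))), 1 ≤ q t := by
    intro k
    exact ae_restrict_of_ae_restrict_of_subset
      (fun t ht => lt_of_le_of_lt (hxnn k) ht.1) hq1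
  have hnn : ∀ k, 0 ≤ a k := by
    intro k
    refine integral_nonneg_of_ae ?_
    filter_upwards [hq0Δ k] with t h1
    simp only [Pi.zero_apply]
    nlinarith [sq_nonneg (F.f t), sq_nonneg (F.f' t)]
  have key : ∀ k, p ≤ k →
      ∫ t in Ioo (x k) (x (k+1)), F.f t ^ 2 ≤ δ * a k := by
    intro k hk
    have h1 : ∀ y : ℝ, x k ≤ y → 4*ε/δ ≤ ∫ t in Icc y (y+ε), q t := by
      intro y hy
      refine hX0 y ?_
      have hxP : X0 ≤ x p := hP p (le_max_right K P)
      have : x p ≤ x k := hmono.monotone hk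
      linarith
    have h2 : 2/δ * (x (k+1) - x k) ≤ ∫ t in Icc (x k) (x (k+1)), q t := by
      have hKk := hK k (le_trans (le_max_left K P) hk)
      have hdpos : (0:ℝ) < x (k+1) - x k := sub_pos.2 (hmono (Nat.lt_succ_self k))
      have h3 := mul_le_mul_of_nonneg_right hKk hdpos.le
      calc 2/δ * (x (k+1) - x k) ≤
          ((1 / (x (k + 1) - x k)) * ∫ t in Icc (x k) (x (k + 1)), q t) * (x (k+1) - x k) := h3
        _ = ∫ t in Icc (x k) (x (k + 1)), q t := by
            field_simp
    have hb := delta_bound hx0 hmono F hq hq1 hδ hε (le_of_eq h8) h1 h2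
    obtain ⟨hf2Δ, hqf2Δ⟩ := pw1_int hx0 hmono hq F k
    have hf'2Δ : IntegrableOn (fun t => F.f' t ^ 2) (Ioo (x k) (x (k+1))) volume :=
      (F.sq_d k).mono_set Ioo_subset_Icc_self
    have haeq : a k = (∫ t in Ioo (x k) (x (k+1)), F.f' t ^ 2) +
        ∫ t in Ioo (x k) (x (k+1)), q t * F.f t ^ 2 := by
      rw [hadef]
      exact integral_add hf'2Δ hqf2Δ
    rw [haeq]
    exact hb
  have htail : ∑' i, a (i + p) ≤ 1 := by
    have h := Summable.sum_add_tsum_nat_add p hsum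
    have h2 : 0 ≤ ∑ i ∈ Finset.range p, a i := Finset.sum_nonneg fun i _ => hnn i
    have h3 : (∑' k, a k) ≤ 1 := hle
    linarith
  by_cases hInt : IntegrableOn (fun t => F.f t ^ 2) (Ioi (x p)) volume
  · have hdec : Ioi (x p) = ⋃ i : ℕ, Ioc (x (p+i)) (x (p+i+1)) := by
      ext t
      simp only [mem_Ioi, mem_iUnion, mem_Ioc]
      constructor
      · intro ht
        have hex : ∃ n, t ≤ x n := (hxtop.eventually_ge_atTop t).exists
        classical
        have hn0 : t ≤ x (Nat.find hex) := Nat.find_spec hex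
        have hgt : p < Nat.find hex := by
          by_contra h
          push_neg at h
          have : x (Nat.find hex) ≤ x p := hmono.monotone h
          linarith
        refine ⟨Nat.find hex - p - 1, ?_, ?_⟩
        · have he1 : p + (Nat.find hex - p - 1) = Nat.find hex - 1 := by omega
          rw [he1]
          have hlt' : Nat.find hex - 1 < Nat.find hex := by omega
          have hmin := Nat.find_min hex hlt'
          push_neg at hmin
          exact hmin
        · have he2 : p + (Nat.find hex - p - 1) + 1 = Nat.find hex := by omega
          rw [he2]
          exact hn0
      · rintro ⟨i, h1, h2⟩
        exact lt_of_le_of_lt (hmono.monotone (Nat.le_add_right p i)) h1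
    have hmeas : ∀ i : ℕ, MeasurableSet (Ioc (x (p+i)) (x (p+i+1))) :=
      fun _ => measurableSet_Ioc
    have hdisjaux : ∀ i j : ℕ, i < j →
        Disjoint (Ioc (x (p+i)) (x (p+i+1))) (Ioc (x (p+j)) (x (p+j+1))) := by
      intro i j hij
      refine Set.disjoint_left.2 fun t h1 h2 => ?_
      have hle' : x (p+i+1) ≤ x (p+j) := hmono.monotone (by omega)
      have := h1.2
      have := h2.1
      linarith
    have hdisj : Pairwise (Function.onFun Disjoint fun i : ℕ => Ioc (x (p+i)) (x (p+i+1))) := by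
      intro i j hij
      rcases hij.lt_or_gt with h | h
      · exact hdisjaux i j h
      · exact (hdisjaux j i h).symm
    have hs := hasSum_integral_iUnion hmeas hdisj (by rw [← hdec]; exact hInt)
    have hUeq : (∫ t in (⋃ i : ℕ, Ioc (x (p+i)) (x (p+i+1))), F.f t ^ 2) =
        ∫ t in Ioi (x p), F.f t ^ 2 := by rw [← hdec]
    have hterm : ∀ i : ℕ, (∫ t in Ioc (x (p+i)) (x (p+i+1)), F.f t ^ 2) ≤ δ * a (i + p) := by
      intro i
      rw [integral_Ioc_eq_integral_Ioo]
      have h := key (p+i) (Nat.le_add_right p i)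
      rw [add_comm i p]
      exact h
    have hsumm2 : Summable (fun i => δ * a (i + p)) :=
      ((summable_nat_add_iff p).2 hsum).mul_left δ
    have hfin := Summable.tsum_le_tsum hterm hs.summable hsumm2
    rw [hs.tsum_eq, hUeq] at hfin
    calc ∫ t in Ioi (x p), F.f t ^ 2 ≤ ∑' i, δ * a (i + p) := hfin
      _ = δ * ∑' i, a (i + p) := tsum_mul_left
      _ ≤ δ * 1 := mul_le_mul_of_nonneg_left htail hδ.le
      _ = δ := mul_one δ
  · rw [integral_undef hInt]
    linarith


end
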